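/- The principal symbol sequence of the monopole deformation complex is exact: for any nonzero covector $\xi$ on a 3-dimensional vector space $V$ with inner product, the sequence $\Lambda^0 V^* \to \Lambda^1 V^* \oplus \Lambda^3 V^* \to \Lambda^2 V^*$, given first by $c \mapsto (\xi \wedge c, 0)$ (i.e., $c\mapsto (c\,\xi,0)$) and then by $(a,\phi) \mapsto \xi \wedge a - \iota_{\xi^\sharp}\phi$, is exact at the middle term, the first map is injective, and the second map is surjective. -/

import Mathlib

open Matrix


lemma lagrange (u v w : Fin 3 → ℝ) :
    crossProduct u (crossProduct v w) = (u ⬝ᵥ w) • v - (u ⬝ᵥ v) • w := by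
  funext i
  fin_cases i <;>
    simp [crossProduct, dotProduct, Fin.sum_univ_three] <;> ring

/- STATEMENT 1: exactness of the symbol sequence of the deformation complex.
V is 3-dimensional; we use the standard identifications Λ⁰V*≅ℝ, Λ¹V*≅ℝ³,
Λ²V*≅ℝ³ (Hodge), Λ³V*≅ℝ, under which ξ∧a is the cross product ξ × a and
ι_{ξ♯}(φ·vol) corresponds to φ·ξ.  First map c ↦ (c•ξ, 0), second map
(a,φ) ↦ ξ∧a - ι_{ξ♯}φ. -/
theorem stmt1 (ξ : Fin 3 → ℝ) (hξ : ξ ≠ 0)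
    (f1 : ℝ →ₗ[ℝ] (Fin 3 → ℝ) × ℝ)
    (f2 : ((Fin 3 → ℝ) × ℝ) →ₗ[ℝ] (Fin 3 → ℝ))
    (hf1 : ∀ c : ℝ, f1 c = (c • ξ, 0))
    (hf2 : ∀ (a : Fin 3 → ℝ) (φ : ℝ), f2 (a, φ) = crossProduct ξ a - φ • ξ) :
    Function.Injective f1 ∧ LinearMap.range f1 = LinearMap.ker f2 ∧
      Function.Surjective f2 := by
  have hξξ : ξ ⬝ᵥ ξ ≠ 0 := fun h => hξ (dotProduct_self_eq_zero.mp h)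
  refine ⟨?_, ?_, ?_⟩
  · intro c c' h
    rw [hf1, hf1, Prod.mk.injEq] at h
    exact smul_left_injective ℝ hξ h.1
  · ext ⟨a, φ⟩
    simp only [LinearMap.mem_range, LinearMap.mem_ker, hf2]
    constructor
    · rintro ⟨c, hc⟩
      rw [hf1, Prod.mk.injEq] at hc
      obtain ⟨h1, h2⟩ := hc
      rw [← h1, ← h2, _root_.map_smul]
      simp [cross_self]
    · intro h
      have h' : crossProduct ξ a = φ • ξ := sub_eq_zero.mp h
      have hdot : ξ ⬝ᵥ (crossProduct ξ a) = 0 := dot_self_cross ξ a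
      rw [h', dotProduct_smul] at hdot
      have hφ : φ = 0 := by
        rcases mul_eq_zero.mp hdot with h0 | h0
        · exact h0
        · exact absurd h0 hξξ
      have hc0 : crossProduct ξ a = 0 := by rw [h', hφ, zero_smul]
      have hl := lagrange ξ ξ a
      rw [hc0, map_zero] at hl
      have ha : (ξ ⬝ᵥ ξ) • a = (ξ ⬝ᵥ a) • ξ := by
        have := hl.symm
        rwa [sub_eq_zero, eq_comm] at this
      refine ⟨(ξ ⬝ᵥ a) / (ξ ⬝ᵥ ξ), ?_⟩
      rw [hf1, hφ, Prod.mk.injEq]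
      refine ⟨?_, rfl⟩
      rw [div_eq_inv_mul, ← smul_smul, ← ha, smul_smul, inv_mul_cancel₀ hξξ, one_smul]
  · intro b
    refine ⟨((ξ ⬝ᵥ ξ)⁻¹ • crossProduct b ξ, -(ξ ⬝ᵥ b) / (ξ ⬝ᵥ ξ)), ?_⟩
    rw [hf2, _root_.map_smul, lagrange]
    funext i
    simp only [Pi.sub_apply, Pi.smul_apply, smul_eq_mul]
    have hne : ξ 0 ^ 2 + ξ 1 ^ 2 + ξ 2 ^ 2 ≠ 0 := by
      simpa [dotProduct, Fin.sum_univ_three, sq] using hξξ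
    simp only [dotProduct, Fin.sum_univ_three]
    field_simp
    ring
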